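/- Lemma 1 (adapted from Shen et al.): Let (Z, d) be a metric space equipped with its Borel σ-algebra, let μᵢ and μⱼ be Borel probability measures on Z, let L ≥ 0, and let h, h' : Z → ℝ be L-Lipschitz functions taking values in [0, 1]. Then ε_{μᵢ}(h, h') ≤ ε_{μⱼ}(h, h') + 2L · W₁(μᵢ, μⱼ). -/

import Mathlib

open MeasureTheory

/-- The Earth Mover's (1-Wasserstein) distance between two Borel measures on a metric
space: the infimum, taken in `[0, ∞]`, over all probability couplings `γ` (probability
measures on `Z × Z` with first marginal `μ` and second marginal `ν`) of `∫ d(z, z') dγ`. -/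
noncomputable def W1 {Z : Type*} [MetricSpace Z] [MeasurableSpace Z]
    (μ ν : Measure Z) : ENNReal :=
  ⨅ (γ : Measure (Z × Z)) (_ : IsProbabilityMeasure γ)
    (_ : γ.map Prod.fst = μ) (_ : γ.map Prod.snd = ν),
    ∫⁻ p, ENNReal.ofReal (dist p.1 p.2) ∂γ

/-- The disagreement `ε_μ(h, h') = ∫ |h(z) − h'(z)| dμ(z)` between two hypotheses. -/
noncomputable def disag {Z : Type*} [MeasurableSpace Z]
    (μ : Measure Z) (h h' : Z → ℝ) : ℝ :=
  ∫ z, |h z - h' z| ∂μ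

/-- Lemma 1 (adapted from Shen et al.): for `L`-Lipschitz hypotheses `h, h'` taking
values in `[0, 1]`, the disagreement satisfies
`ε_{μᵢ}(h, h') ≤ ε_{μⱼ}(h, h') + 2L · W₁(μᵢ, μⱼ)`. -/
theorem lemma_shen
    {Z : Type*} [MetricSpace Z] [MeasurableSpace Z] [BorelSpace Z]
    (μi μj : Measure Z) [IsProbabilityMeasure μi] [IsProbabilityMeasure μj]
    (L : ℝ) (hL : 0 ≤ L) (h h' : Z → ℝ)
    (hh : LipschitzWith (Real.toNNReal L) h)
    (hh' : LipschitzWith (Real.toNNReal L) h')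
    (hhval : ∀ z, h z ∈ Set.Icc (0 : ℝ) 1)
    (hh'val : ∀ z, h' z ∈ Set.Icc (0 : ℝ) 1) :
    ENNReal.ofReal (disag μi h h') ≤
      ENNReal.ofReal (disag μj h h') + ENNReal.ofReal (2 * L) * W1 μi μj := by
  classical
  set g : Z → ℝ := fun z => |h z - h' z| with hgdef
  have hgc : Continuous g := (hh.continuous.sub hh'.continuous).abs
  have hgm : Measurable g := hgc.measurable
  have hg0 : ∀ z, 0 ≤ g z := fun z => abs_nonneg _
  have hg1 : ∀ z, g z ≤ 1 := by
    intro z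
    obtain ⟨a1, a2⟩ := hhval z
    obtain ⟨b1, b2⟩ := hh'val z
    rw [hgdef]; dsimp only
    rw [abs_le]; constructor <;> linarith
  have hInt : ∀ (μ : Measure Z) [IsProbabilityMeasure μ], Integrable g μ := by
    intro μ _
    refine Integrable.mono' (integrable_const (1 : ℝ)) hgc.aestronglyMeasurable ?_
    exact ae_of_all _ fun z => by rw [Real.norm_eq_abs, abs_of_nonneg (hg0 z)]; exact hg1 z
  have hofReal : ∀ (μ : Measure Z) [IsProbabilityMeasure μ],
      ENNReal.ofReal (disag μ h h') = ∫⁻ z, ENNReal.ofReal (g z) ∂μ := by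
    intro μ _
    exact MeasureTheory.ofReal_integral_eq_lintegral_ofReal (hInt μ) (ae_of_all _ hg0)
  have hglip : ∀ x y : Z, g x ≤ g y + 2 * L * dist x y := by
    intro x y
    have e1 : |h x - h y| ≤ L * dist x y := by
      have := hh.dist_le_mul x y
      rw [Real.coe_toNNReal L hL, Real.dist_eq] at this
      exact this
    have e2 : |h' x - h' y| ≤ L * dist x y := by
      have := hh'.dist_le_mul x y
      rw [Real.coe_toNNReal L hL, Real.dist_eq] at this
      exact this
    have t1 : |h x - h' x| - |h y - h' y| ≤ |(h x - h' x) - (h y - h' y)| :=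
      abs_sub_abs_le_abs_sub _ _
    have t2 : |(h x - h' x) - (h y - h' y)| ≤ |h x - h y| + |h' x - h' y| := by
      have : (h x - h' x) - (h y - h' y) = (h x - h y) - (h' x - h' y) := by ring
      rw [this]
      exact abs_sub _ _
    rw [hgdef]; dsimp only
    linarith
  have key : ∀ (γ : Measure (Z × Z)) (_ : IsProbabilityMeasure γ)
      (_ : γ.map Prod.fst = μi) (_ : γ.map Prod.snd = μj),
      ENNReal.ofReal (disag μi h h') ≤ ENNReal.ofReal (disag μj h h') +
        ENNReal.ofReal (2 * L) * ∫⁻ p, ENNReal.ofReal (dist p.1 p.2) ∂γ := by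
    intro γ hγ h1 h2
    rw [hofReal μi, hofReal μj, ← h1, ← h2,
      lintegral_map hgm.ennreal_ofReal measurable_fst,
      lintegral_map hgm.ennreal_ofReal measurable_snd]
    calc ∫⁻ p, ENNReal.ofReal (g p.1) ∂γ
        ≤ ∫⁻ p, (ENNReal.ofReal (g p.2) +
            ENNReal.ofReal (2 * L) * ENNReal.ofReal (dist p.1 p.2)) ∂γ := by
          refine lintegral_mono fun p => ?_
          rw [← ENNReal.ofReal_mul (by positivity),
            ← ENNReal.ofReal_add (hg0 _) (by positivity)]
          exact ENNReal.ofReal_le_ofReal (hglip p.1 p.2)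
      _ = _ := by
          rw [lintegral_add_left (f := fun p : Z × Z => ENNReal.ofReal (g p.2))
              ((hgm.comp measurable_snd).ennreal_ofReal),
            lintegral_const_mul' _ _ ENNReal.ofReal_ne_top]
  rcases hL.eq_or_lt with hL0 | hLpos
  · -- L = 0 : h and h' are constant, so the disagreements agree
    rcases isEmpty_or_nonempty Z with hZ | hZ
    · exfalso
      have := measure_univ (μ := μi)
      rw [Set.univ_eq_empty_iff.mpr hZ, measure_empty] at this
      exact zero_ne_one this
    · obtain ⟨z₀⟩ := hZ
      have hconst : ∀ (f : Z → ℝ), LipschitzWith (Real.toNNReal L) f → ∀ z, f z = f z₀ := by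
        intro f hf z
        have := hf.dist_le_mul z z₀
        rw [Real.coe_toNNReal L hL, ← hL0, zero_mul] at this
        exact dist_le_zero.mp this
      have hgconst : g = fun _ => g z₀ := by
        funext z
        rw [hgdef]; dsimp only
        rw [hconst h hh z, hconst h' hh' z]
      have hdis : ∀ (μ : Measure Z) [IsProbabilityMeasure μ], disag μ h h' = g z₀ := by
        intro μ _
        have : disag μ h h' = ∫ _, g z₀ ∂μ := by
          unfold disag
          exact congrArg (fun f => ∫ z, f z ∂μ) hgconst
        rw [this, integral_const]
        simp
      rw [hdis μi, hdis μj]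
      exact le_self_add
  · -- L > 0
    set c := ENNReal.ofReal (2 * L) with hc
    have hc0 : c ≠ 0 := by
      rw [hc]
      exact (ENNReal.ofReal_pos.mpr (by linarith)).ne'
    have hct : c ≠ ⊤ := ENNReal.ofReal_ne_top
    have main : ENNReal.ofReal (disag μi h h') - ENNReal.ofReal (disag μj h h') ≤ c * W1 μi μj := by
      rw [mul_comm, ← ENNReal.div_le_iff_le_mul (Or.inl hc0) (Or.inl hct), W1]
      refine le_iInf fun γ => le_iInf fun hγ => le_iInf fun h1 => le_iInf fun h2 => ?_
      rw [ENNReal.div_le_iff_le_mul (Or.inl hc0) (Or.inl hct), mul_comm]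
      exact tsub_le_iff_left.mpr (key γ hγ h1 h2)
    calc ENNReal.ofReal (disag μi h h')
        ≤ ENNReal.ofReal (disag μj h h') +
          (ENNReal.ofReal (disag μi h h') - ENNReal.ofReal (disag μj h h')) := le_add_tsub
      _ ≤ _ := add_le_add le_rfl main
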